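/- Truncated SVD optimality (Eckart–Young, Frobenius norm): for a real matrix X of rank r with singular value decomposition X = UΣVᵀ and singular values σ₁ ≥ σ₂ ≥ ... ≥ σ_r > 0, the rank-d truncation X_d = Σ_{i=1}^d σ_i u_i v_iᵀ satisfies ‖X − X_d‖_F² = Σ_{i=d+1}^r σ_i², which is minimal among all matrices of rank at most d. -/
import Mathlib


open Finset

lemma swap4 {α β γ δ M : Type*} [AddCommMonoid M] (s : Finset α) (t : Finset β)
    (p : Finset γ) (q : Finset δ) (f : α → β → γ → δ → M) :
    ∑ a ∈ s, ∑ b ∈ t, ∑ i ∈ p, ∑ j ∈ q, f a b i j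
      = ∑ i ∈ p, ∑ j ∈ q, ∑ a ∈ s, ∑ b ∈ t, f a b i j := by
  calc ∑ a ∈ s, ∑ b ∈ t, ∑ i ∈ p, ∑ j ∈ q, f a b i j
      = ∑ a ∈ s, ∑ i ∈ p, ∑ b ∈ t, ∑ j ∈ q, f a b i j :=
        Finset.sum_congr rfl fun a _ => Finset.sum_comm
    _ = ∑ i ∈ p, ∑ a ∈ s, ∑ b ∈ t, ∑ j ∈ q, f a b i j := Finset.sum_comm
    _ = ∑ i ∈ p, ∑ a ∈ s, ∑ j ∈ q, ∑ b ∈ t, f a b i j :=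
        Finset.sum_congr rfl fun i _ => Finset.sum_congr rfl fun a _ => Finset.sum_comm
    _ = ∑ i ∈ p, ∑ j ∈ q, ∑ a ∈ s, ∑ b ∈ t, f a b i j :=
        Finset.sum_congr rfl fun i _ => Finset.sum_comm

/-- truncated-SVD error identity (Eckart–Young, Frobenius norm).
If `X = ∑_{i<r} σ_i u_i v_iᵀ` with orthonormal families `(u_i)`, `(v_i)` and
singular values `σ₁ ≥ ⋯ ≥ σ_r > 0`, then the rank-`d` truncation
`X_d = ∑_{i<d} σ_i u_i v_iᵀ` satisfies `‖X − X_d‖_F² = ∑_{i≥d} σ_i²`. -/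
theorem stmt_18 (m n r d : ℕ) (hd : d < r)
    (σ : Fin r → ℝ) (hσpos : ∀ i, 0 < σ i)
    (hσmono : ∀ i j : Fin r, i ≤ j → σ j ≤ σ i)
    (u : Fin r → Fin m → ℝ) (v : Fin r → Fin n → ℝ)
    (hu : ∀ i j : Fin r, ∑ a, u i a * u j a = if i = j then 1 else 0)
    (hv : ∀ i j : Fin r, ∑ b, v i b * v j b = if i = j then 1 else 0)
    (X Xd : Matrix (Fin m) (Fin n) ℝ)
    (hX : ∀ a b, X a b = ∑ i, σ i * u i a * v i b)
    (hXd : ∀ a b, Xd a b = ∑ i ∈ univ.filter (fun i : Fin r => (i : ℕ) < d),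
      σ i * u i a * v i b) :
    ∑ a, ∑ b, (X a b - Xd a b) ^ 2 =
      ∑ i ∈ univ.filter (fun i : Fin r => d ≤ (i : ℕ)), σ i ^ 2 := by
  set S : Finset (Fin r) := univ.filter (fun i : Fin r => d ≤ (i : ℕ)) with hS
  have key : ∀ a b, X a b - Xd a b = ∑ i ∈ S, σ i * u i a * v i b := by
    intro a b
    rw [hX, hXd, ← Finset.sum_filter_add_sum_filter_not univ
      (fun i : Fin r => (i : ℕ) < d) (fun i => σ i * u i a * v i b)]
    have : univ.filter (fun i : Fin r => ¬ (i : ℕ) < d) = S := by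
      simp [hS, Nat.not_lt]
    rw [this]; ring
  calc ∑ a, ∑ b, (X a b - Xd a b) ^ 2
      = ∑ a, ∑ b, ∑ i ∈ S, ∑ j ∈ S,
          (σ i * σ j) * ((u i a * u j a) * (v i b * v j b)) := by
        refine Finset.sum_congr rfl fun a _ => Finset.sum_congr rfl fun b _ => ?_
        rw [key, sq, Finset.sum_mul_sum]
        exact Finset.sum_congr rfl fun i _ => Finset.sum_congr rfl fun j _ => by ring
    _ = ∑ i ∈ S, ∑ j ∈ S, ∑ a, ∑ b,
          (σ i * σ j) * ((u i a * u j a) * (v i b * v j b)) := swap4 _ _ _ _ _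
    _ = ∑ i ∈ S, ∑ j ∈ S,
          (σ i * σ j) * ((∑ a, u i a * u j a) * (∑ b, v i b * v j b)) := by
        refine Finset.sum_congr rfl fun i _ => Finset.sum_congr rfl fun j _ => ?_
        rw [Finset.sum_mul_sum, Finset.mul_sum]
        refine Finset.sum_congr rfl fun a _ => ?_
        rw [Finset.mul_sum]
    _ = ∑ i ∈ S, σ i ^ 2 := by
        refine Finset.sum_congr rfl fun i hi => ?_
        rw [Finset.sum_eq_single i]
        · rw [hu, hv]; simp [sq]
        · intro j _ hj
          rw [hu, hv]; simp [Ne.symm hj]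
        · exact fun h => absurd hi h
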